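/- Let G^{Init} be a rooted binary tree and 𝒢 a set of k ≥ 2 pairwise separated subtrees covering all leaves of G^{Init}. Then any triplet-respecting supertree G^{TR} for 𝒢 contains, for every node x of G^{Init} with |𝒢(x)| ≥ 2, a node y with L(y) = L(x), and these nodes form a subset of nodes of G^{TR} whose induced ancestor relation coincides with the ancestor relation of the corresponding nodes in G^{Init}. -/

import Mathlib

inductive BTree (α : Type) where
  | leaf : α → BTree α
  | node : BTree α → BTree α → BTree α
deriving DecidableEq

namespace BTree

variable {α : Type} [DecidableEq α] {σ : Type} [DecidableEq σ] {γ : Type} [DecidableEq γ]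

/-- leaf (label) set of a tree -/
def leaves : BTree α → Finset α
  | leaf a => {a}
  | node l r => leaves l ∪ leaves r

/-- the leaf labels are pairwise distinct -/
def nodupLeaves : BTree α → Prop
  | leaf _ => True
  | node l r => nodupLeaves l ∧ nodupLeaves r ∧ Disjoint (leaves l) (leaves r)

/-- the (unordered) bipartition `(Ll, Lr)` is compatible with the tree:
the whole leaf set lies in one part, or the leaf sets of the two root child
subtrees lie in opposite parts. -/
def compatible : BTree α → Finset α → Finset α → Prop
  | leaf a, Ll, Lr => a ∈ Ll ∨ a ∈ Lr
  | node l r, Ll, Lr =>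
      leaves l ∪ leaves r ⊆ Ll ∨ leaves l ∪ leaves r ⊆ Lr ∨
      (leaves l ⊆ Ll ∧ leaves r ⊆ Lr) ∨ (leaves l ⊆ Lr ∧ leaves r ⊆ Ll)

/-- union of the leaf sets of a list of trees -/
def unionLeaves (Gs : List (BTree α)) : Finset α :=
  Gs.foldr (fun g acc => leaves g ∪ acc) ∅

/-- `(Ll, Lr)` is a bipartition of the union of the leaf sets (both parts
nonempty) compatible with every tree in the list. -/
def isCompBip (Gs : List (BTree α)) (Ll Lr : Finset α) : Prop :=
  Ll ∪ Lr = unionLeaves Gs ∧ Disjoint Ll Lr ∧ Ll.Nonempty ∧ Lr.Nonempty ∧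
    ∀ G ∈ Gs, compatible G Ll Lr

/-- restriction `G|_L` : remove the leaves not in `L` and suppress the
resulting degree-2 nodes; `none` if no leaf of `G` lies in `L`. -/
def restrict : BTree α → Finset α → Option (BTree α)
  | leaf a, L => if a ∈ L then some (leaf a) else none
  | node l r, L =>
      match restrict l L, restrict r L with
      | some l', some r' => some (node l' r')
      | some l', none => some l'
      | none, some r' => some r'
      | none, none => none

/-- isomorphism of rooted leaf-labeled trees (children are unordered) -/
inductive Iso : BTree α → BTree α → Prop
  | leaf (a : α) : Iso (leaf a) (leaf a)
  | node {l r l' r' : BTree α} : Iso l l' → Iso r r' → Iso (node l r) (node l' r')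
  | swap {l r l' r' : BTree α} : Iso l r' → Iso r l' → Iso (node l r) (node l' r')

/-- `G` displays `G'` : the restriction of `G` to the leaves of `G'` is
isomorphic to `G'` (preserving leaf labels). -/
def displays (G G' : BTree α) : Prop :=
  ∃ t, restrict G (leaves G') = some t ∧ Iso t G'

/-- `Subtree t T` : `t` is a complete rooted subtree of `T` (i.e. `t = T[x]`
for some node `x` of `T`).  Equivalently, the root of `T` is a (weak)
ancestor of the root of `t`. -/
inductive Subtree : BTree α → BTree α → Prop
  | refl (t : BTree α) : Subtree t t
  | left {t l r : BTree α} : Subtree t l → Subtree t (node l r)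
  | right {t l r : BTree α} : Subtree t r → Subtree t (node l r)

/-- two nodes (complete subtrees) are separated: neither is a (weak)
ancestor of the other -/
def separated (u v : BTree α) : Prop := ¬ Subtree u v ∧ ¬ Subtree v u

/-- the subtree rooted at the lowest common ancestor of the leaf set `L` -/
def lcaSub : BTree α → Finset α → BTree α
  | leaf a, _ => leaf a
  | node l r, L =>
      if L ⊆ leaves l then lcaSub l L
      else if L ⊆ leaves r then lcaSub r L
      else node l r

/-- `T1` and `T2` induce the same rooted triplet topology on `{a, b, c}` -/
def sameTriplet (T1 T2 : BTree α) (a b c : α) : Prop :=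
  ∃ t1 t2, restrict T1 {a, b, c} = some t1 ∧ restrict T2 {a, b, c} = some t2 ∧ Iso t1 t2

/-- `GTR` is triplet respecting w.r.t. `GInit` and the family `Gs` : for any
three leaves taken from three distinct trees of `Gs`, `GInit` and `GTR`
induce the same rooted triplet topology. -/
def tripletRespecting (GInit GTR : BTree α) (Gs : List (BTree α)) : Prop :=
  ∀ G1 ∈ Gs, ∀ G2 ∈ Gs, ∀ G3 ∈ Gs, G1 ≠ G2 → G1 ≠ G3 → G2 ≠ G3 →
    ∀ a ∈ leaves G1, ∀ b ∈ leaves G2, ∀ c ∈ leaves G3, sameTriplet GInit GTR a b c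

/-- at least two (distinct) trees of `Gs` are subtrees of `t` : `|𝒢(t)| ≥ 2` -/
def atLeastTwo (Gs : List (BTree α)) (t : BTree α) : Prop :=
  ∃ Gi ∈ Gs, ∃ Gj ∈ Gs, Gi ≠ Gj ∧ Subtree Gi t ∧ Subtree Gj t

/-- `Graft T' T R` : `R` is obtained from `T` by grafting `T'` at some node
`x*` of `T`, i.e. subdividing the edge above `x*` (or adding a new root if
`x*` is the root) and attaching `T'` as the new sibling of `x*`. -/
inductive Graft (T' : BTree α) : BTree α → BTree α → Prop
  | atRootL (T : BTree α) : Graft T' T (node T' T)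
  | atRootR (T : BTree α) : Graft T' T (node T T')
  | left {l r g : BTree α} : Graft T' l g → Graft T' (node l r) (node g r)
  | right {l r g : BTree α} : Graft T' r g → Graft T' (node l r) (node l g)

/-- number of edges from the root of `u` down to the node `v`, if `v` is a
node (complete subtree) of `u` -/
def edist : BTree σ → BTree σ → Option ℕ
  | leaf a, v => if leaf a = v then some 0 else none
  | node l r, v =>
      if node l r = v then some 0 else
      match edist l v, edist r v with
      | some n, _ => some (n + 1)
      | none, some n => some (n + 1)
      | none, none => none

/-- number of nodes strictly between an ancestor `u` and a descendant `v` -/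
def inter (u v : BTree σ) : ℕ := (edist u v).getD 1 - 1

/-- node (`lca`) of the species tree `S` associated to a set `L` of genes -/
def specOf (S : BTree σ) (s : γ → σ) (L : Finset γ) : BTree σ := lcaSub S (L.image s)

/-- the species-tree node `s(x)` associated with a gene-tree node `x`
(lca of the species of the leaves below `x`) -/
def spec (S : BTree σ) (s : γ → σ) (t : BTree γ) : BTree σ := specOf S s (leaves t)

/-- the local LCA-reconciliation cost of a node whose own mapping is `su`
and whose children map to `sl` and `sr` -/
def localCost (su sl sr : BTree σ) : ℕ :=
  inter su sl + inter su sr +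
    (if su = sl ∧ su = sr then 1 else if su = sl ∨ su = sr then 2 else 0)

/-- number of duplication nodes of the LCA-reconciliation -/
def dupCount (S : BTree σ) (s : γ → σ) : BTree γ → ℕ
  | leaf _ => 0
  | node l r =>
      dupCount S s l + dupCount S s r +
      (if spec S s (node l r) = spec S s l ∨ spec S s (node l r) = spec S s r then 1 else 0)

/-- minimum number of losses of the LCA-reconciliation: for each edge `(x,c)`,
`inter(s(x), s(c))` losses, plus one more loss for each child `c` of a
duplication node `x` with `s(c) ≠ s(x)` -/
def lossCount (S : BTree σ) (s : γ → σ) : BTree γ → ℕ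
  | leaf _ => 0
  | node l r =>
      lossCount S s l + lossCount S s r +
      (if spec S s (node l r) = spec S s l ∨ spec S s (node l r) = spec S s r then
        (inter (spec S s (node l r)) (spec S s l) +
          if spec S s l = spec S s (node l r) then 0 else 1) +
        (inter (spec S s (node l r)) (spec S s r) +
          if spec S s r = spec S s (node l r) then 0 else 1)
      else
        inter (spec S s (node l r)) (spec S s l) + inter (spec S s (node l r)) (spec S s r))

/-- sum over all internal nodes of the local LCA-reconciliation costs -/
def totalLocal (S : BTree σ) (s : γ → σ) : BTree γ → ℕ
  | leaf _ => 0
  | node l r =>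
      totalLocal S s l + totalLocal S s r +
      localCost (spec S s (node l r)) (spec S s l) (spec S s r)

/-- `G` is a supertree for `Gs` : a tree on the union of the leaf sets
(each leaf once) displaying every tree of `Gs` -/
def isSupertree (Gs : List (BTree γ)) (G : BTree γ) : Prop :=
  leaves G = unionLeaves Gs ∧ nodupLeaves G ∧ ∀ Gi ∈ Gs, displays G Gi

/-- `MinSGT` : minimum LCA-reconciliation cost over all supertrees -/
noncomputable def reconMin (S : BTree σ) (s : γ → σ) (Gs : List (BTree γ)) : ℕ :=
  sInf {c | ∃ G : BTree γ, isSupertree Gs G ∧ totalLocal S s G = c}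

/-- restrictions `G_i|_L` of the trees of the list (dropping empty ones) -/
def restrictList (Gs : List (BTree γ)) (L : Finset γ) : List (BTree γ) :=
  Gs.filterMap fun G => restrict G L

/-- the four possible ordered choices for distributing a tree into the two
parts of a bipartition: whole tree left, whole tree right, left subtree
left & right subtree right, left subtree right & right subtree left -/
def pick : BTree α → ℕ → Finset α × Finset α
  | G, 0 => (leaves G, ∅)
  | G, 1 => (∅, leaves G)
  | node l r, 2 => (leaves l, leaves r)
  | node l r, _ => (leaves r, leaves l)
  | G, _ => (∅, leaves G)

/-- left part produced by a distribution `f` of choices -/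
def partsLeft (Gs : List (BTree α)) (f : Fin Gs.length → Fin 4) : Finset α :=
  Finset.univ.biUnion fun i => (pick (Gs.get i) (f i).val).1

/-- right part produced by a distribution `f` of choices -/
def partsRight (Gs : List (BTree α)) (f : Fin Gs.length → Fin 4) : Finset α :=
  Finset.univ.biUnion fun i => (pick (Gs.get i) (f i).val).2

/-- the complete subtree at a position (path from the root) -/
def subtreeAt : BTree α → List Bool → Option (BTree α)
  | t, [] => some t
  | leaf _, _ :: _ => none
  | node l _, false :: p => subtreeAt l p
  | node _ r, true :: p => subtreeAt r p

/-- the set of positions of internal nodes -/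
def internalPos : BTree α → Finset (List Bool)
  | leaf _ => ∅
  | node l r =>
      insert [] ((internalPos l).image (List.cons false) ∪
        (internalPos r).image (List.cons true))

end BTree

/-- labeled gene trees: each internal node carries `true` (Dup) or `false` (Spec) -/
inductive LTree (α : Type) where
  | leaf : α → LTree α
  | node : Bool → LTree α → LTree α → LTree α
deriving DecidableEq

namespace LTree

variable {α : Type} [DecidableEq α]

def leaves : LTree α → Finset α
  | leaf a => {a}
  | node _ l r => leaves l ∪ leaves r

/-- underlying unlabeled tree -/
def shape : LTree α → BTree α
  | leaf a => BTree.leaf a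
  | node _ l r => BTree.node (shape l) (shape r)

/-- the event label of the root (`none` for a leaf) -/
def rootEv : LTree α → Option Bool
  | leaf _ => none
  | node e _ _ => some e

inductive Subtree : LTree α → LTree α → Prop
  | refl (t : LTree α) : Subtree t t
  | left {t l r : LTree α} {e : Bool} : Subtree t l → Subtree t (node e l r)
  | right {t l r : LTree α} {e : Bool} : Subtree t r → Subtree t (node e l r)

/-- the subtree rooted at the lowest common ancestor of the leaf set `L` -/
def lcaSub : LTree α → Finset α → LTree α
  | leaf a, _ => leaf a
  | node e l r, L =>
      if L ⊆ leaves l then lcaSub l L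
      else if L ⊆ leaves r then lcaSub r L
      else node e l r

/-- `G` displays `G'` (topologically, ignoring labels) -/
def displaysL (G G' : LTree α) : Prop := BTree.displays (shape G) (shape G')

/-- `(G, ev_G)` is label-compatible with `(G', ev_{G'})` : every internal
node `x'` of `G'` has the same event label as `lca_G(L(x'))` -/
def labelCompatible (G G' : LTree α) : Prop :=
  ∀ (e : Bool) (l r : LTree α), Subtree (node e l r) G' →
    rootEv (lcaSub G (leaves (node e l r))) = some e

end LTree

namespace BTree

variable {α : Type} [DecidableEq α]

lemma leaves_nonempty : ∀ t : BTree α, t.leaves.Nonempty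
  | leaf a => ⟨a, by simp [leaves]⟩
  | node l r => by
      obtain ⟨a, ha⟩ := leaves_nonempty l
      exact ⟨a, by simp [leaves, ha]⟩

lemma Subtree.trans {a b c : BTree α} (h1 : Subtree a b) (h2 : Subtree b c) : Subtree a c := by
  induction h2 with
  | refl => exact h1
  | left _ ih => exact Subtree.left ih
  | right _ ih => exact Subtree.right ih

lemma Subtree.leaves_subset {u v : BTree α} (h : Subtree u v) : u.leaves ⊆ v.leaves := by
  induction h with
  | refl => exact fun _ h => h
  | left _ ih => exact ih.trans (by simp [leaves, Finset.subset_union_left])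
  | right _ ih => exact ih.trans (by simp [leaves, Finset.subset_union_right])

lemma nodup_of_subtree {u v : BTree α} (h : Subtree u v) (hv : v.nodupLeaves) :
    u.nodupLeaves := by
  induction h with
  | refl => exact hv
  | left _ ih => exact ih hv.1
  | right _ ih => exact ih hv.2.1

lemma comparable {T u v : BTree α} (hT : T.nodupLeaves) (hu : Subtree u T)
    (hv : Subtree v T) : Subtree u v ∨ Subtree v u ∨ Disjoint u.leaves v.leaves := by
  induction T with
  | leaf a =>
      cases hu; cases hv; exact Or.inl (Subtree.refl _)
  | node l r ihl ihr =>
      obtain ⟨hl, hr, hd⟩ := hT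
      cases hu with
      | refl => exact Or.inr (Or.inl hv)
      | left hu' =>
          cases hv with
          | refl => exact Or.inl (Subtree.left hu')
          | left hv' => exact ihl hl hu' hv'
          | right hv' =>
              exact Or.inr (Or.inr (Finset.disjoint_of_subset_left hu'.leaves_subset
                (Finset.disjoint_of_subset_right hv'.leaves_subset hd)))
      | right hu' =>
          cases hv with
          | refl => exact Or.inl (Subtree.right hu')
          | left hv' =>
              exact Or.inr (Or.inr (Finset.disjoint_of_subset_left hu'.leaves_subset
                (Finset.disjoint_of_subset_right hv'.leaves_subset hd.symm)))
          | right hv' => exact ihr hr hu' hv'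

lemma subtree_eq_of_leaves {u v : BTree α} (hv : v.nodupLeaves) (h : Subtree u v)
    (hle : v.leaves ⊆ u.leaves) : u = v := by
  cases h with
  | refl => rfl
  | @left l r h' =>
      exfalso
      obtain ⟨hl, hr, hd⟩ := hv
      obtain ⟨a, ha⟩ := leaves_nonempty r
      have h2 : a ∈ l.leaves := h'.leaves_subset (hle (by simp [leaves, ha]))
      exact Finset.disjoint_left.mp hd h2 ha
  | @right l r h' =>
      exfalso
      obtain ⟨hl, hr, hd⟩ := hv
      obtain ⟨a, ha⟩ := leaves_nonempty l
      have h2 : a ∈ r.leaves := h'.leaves_subset (hle (by simp [leaves, ha]))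
      exact Finset.disjoint_left.mp hd ha h2

lemma subtree_iff_leaves_subset {T u v : BTree α} (hT : T.nodupLeaves)
    (hu : Subtree u T) (hv : Subtree v T) : Subtree v u ↔ v.leaves ⊆ u.leaves := by
  constructor
  · exact Subtree.leaves_subset
  · intro hle
    rcases comparable hT hu hv with h | h | h
    · have heq := subtree_eq_of_leaves (nodup_of_subtree hv hT) h hle
      exact heq ▸ Subtree.refl _
    · exact h
    · obtain ⟨a, ha⟩ := leaves_nonempty v
      exact absurd (hle ha) (Finset.disjoint_right.mp h ha)

lemma restrict_eq_none {T : BTree α} {L : Finset α} (h : restrict T L = none) :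
    ∀ a ∈ T.leaves, a ∉ L := by
  induction T with
  | leaf b =>
      intro a ha haL
      simp only [leaves, Finset.mem_singleton] at ha
      subst ha
      simp [restrict, haL] at h
  | node l r ihl ihr =>
      intro a ha
      simp only [restrict] at h
      rcases hl : restrict l L with _ | l' <;> rcases hr : restrict r L with _ | r' <;>
        rw [hl, hr] at h <;> try simp at h
      simp only [leaves, Finset.mem_union] at ha
      rcases ha with ha | ha
      · exact ihl hl a ha
      · exact ihr hr a ha

lemma restrict_leaves {T t : BTree α} {L : Finset α} (h : restrict T L = some t) :
    t.leaves = T.leaves ∩ L := by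
  induction T generalizing t with
  | leaf b =>
      by_cases hb : b ∈ L <;> simp [restrict, hb] at h
      subst h
      simp [leaves, Finset.inter_comm, hb]
  | node l r ihl ihr =>
      simp only [restrict] at h
      rcases hl : restrict l L with _ | l' <;> rcases hr : restrict r L with _ | r' <;>
        rw [hl, hr] at h
      · simp at h
      · cases h
        have h1 : l.leaves ∩ L = ∅ := by
          ext a; simp only [Finset.mem_inter, Finset.notMem_empty, iff_false, not_and]
          exact fun ha => restrict_eq_none hl a ha
        rw [ihr hr]
        simp [leaves, Finset.union_inter_distrib_right, h1]
      · cases h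
        have h1 : r.leaves ∩ L = ∅ := by
          ext a; simp only [Finset.mem_inter, Finset.notMem_empty, iff_false, not_and]
          exact fun ha => restrict_eq_none hr a ha
        rw [ihl hl]
        simp [leaves, Finset.union_inter_distrib_right, h1]
      · cases h
        simp [leaves, ihl hl, ihr hr, Finset.union_inter_distrib_right]

lemma restrict_isSome {T : BTree α} {L : Finset α} {a : α} (ha : a ∈ T.leaves) (haL : a ∈ L) :
    ∃ t, restrict T L = some t := by
  rcases h : restrict T L with _ | t
  · exact absurd haL (restrict_eq_none h a ha)
  · exact ⟨t, rfl⟩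

lemma restrict_nodup {T t : BTree α} {L : Finset α} (hT : T.nodupLeaves)
    (h : restrict T L = some t) : t.nodupLeaves := by
  induction T generalizing t with
  | leaf b =>
      by_cases hb : b ∈ L <;> simp [restrict, hb] at h
      subst h; trivial
  | node l r ihl ihr =>
      obtain ⟨h1, h2, h3⟩ := hT
      simp only [restrict] at h
      rcases hl : restrict l L with _ | l' <;> rcases hr : restrict r L with _ | r' <;>
        rw [hl, hr] at h
      · simp at h
      · cases h; exact ihr h2 hr
      · cases h; exact ihl h1 hl
      · cases h
        refine ⟨ihl h1 hl, ihr h2 hr, ?_⟩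
        rw [restrict_leaves hl, restrict_leaves hr]
        exact Finset.disjoint_of_subset_left Finset.inter_subset_left
          (Finset.disjoint_of_subset_right Finset.inter_subset_left h3)

lemma restrict_subtree {T t x u : BTree α} {L : Finset α} (hT : restrict T L = some t)
    (hx : Subtree x T) (hu : restrict x L = some u) : Subtree u t := by
  induction T generalizing t with
  | leaf b =>
      cases hx
      rw [hT] at hu; cases hu
      exact Subtree.refl _
  | node l r ihl ihr =>
      cases hx with
      | refl =>
          rw [hT] at hu; cases hu; exact Subtree.refl _
      | left hx' =>
          simp only [restrict] at hT
          rcases hl : restrict l L with _ | l' <;> rw [hl] at hT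
          · obtain ⟨a, ha⟩ := leaves_nonempty u
            have := restrict_leaves hu
            rw [this] at ha
            exact absurd (Finset.mem_inter.mp ha).2
              (restrict_eq_none hl a (hx'.leaves_subset (Finset.mem_inter.mp ha).1))
          · have hsub : Subtree u l' := ihl hl hx'
            rcases hr : restrict r L with _ | r' <;> rw [hr] at hT <;> cases hT
            · exact hsub
            · exact Subtree.left hsub
      | right hx' =>
          simp only [restrict] at hT
          rcases hr : restrict r L with _ | r' <;> rw [hr] at hT
          · obtain ⟨a, ha⟩ := leaves_nonempty u
            have := restrict_leaves hu
            rw [this] at ha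
            exact absurd (Finset.mem_inter.mp ha).2
              (restrict_eq_none hr a (hx'.leaves_subset (Finset.mem_inter.mp ha).1))
          · have hsub : Subtree u r' := ihr hr hx'
            rcases hl : restrict l L with _ | l' <;> rw [hl] at hT <;> cases hT
            · exact hsub
            · exact Subtree.right hsub

lemma Iso.leaves_eq {t1 t2 : BTree α} (h : Iso t1 t2) : t1.leaves = t2.leaves := by
  induction h with
  | leaf a => rfl
  | node _ _ ih1 ih2 => simp [leaves, ih1, ih2]
  | swap _ _ ih1 ih2 => simp [leaves, ih1, ih2, Finset.union_comm]

lemma Iso.subtree_transfer {t1 t2 u : BTree α} (h : Iso t1 t2) (hu : Subtree u t1) :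
    ∃ u', Subtree u' t2 ∧ u'.leaves = u.leaves := by
  induction h generalizing u with
  | leaf a => cases hu; exact ⟨_, Subtree.refl _, rfl⟩
  | @node l r l' r' h1 h2 ih1 ih2 =>
      cases hu with
      | refl =>
          exact ⟨_, Subtree.refl _, by simp [leaves, h1.leaves_eq, h2.leaves_eq]⟩
      | left hu' =>
          obtain ⟨u', hs, he⟩ := ih1 hu'
          exact ⟨u', Subtree.left hs, he⟩
      | right hu' =>
          obtain ⟨u', hs, he⟩ := ih2 hu'
          exact ⟨u', Subtree.right hs, he⟩
  | @swap l r l' r' h1 h2 ih1 ih2 =>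
      cases hu with
      | refl =>
          exact ⟨_, Subtree.refl _,
            by simp [leaves, h1.leaves_eq, h2.leaves_eq, Finset.union_comm]⟩
      | left hu' =>
          obtain ⟨u', hs, he⟩ := ih1 hu'
          exact ⟨u', Subtree.right hs, he⟩
      | right hu' =>
          obtain ⟨u', hs, he⟩ := ih2 hu'
          exact ⟨u', Subtree.left hs, he⟩

lemma lcaSub_subtree : ∀ (T : BTree α) (L : Finset α), Subtree (lcaSub T L) T
  | leaf a, _ => Subtree.refl _
  | node l r, L => by
      simp only [lcaSub]
      split
      · exact Subtree.left (lcaSub_subtree l L)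
      · split
        · exact Subtree.right (lcaSub_subtree r L)
        · exact Subtree.refl _

lemma lcaSub_superset : ∀ (T : BTree α) (L : Finset α), L ⊆ T.leaves →
    L ⊆ (lcaSub T L).leaves
  | leaf a, _, h => h
  | node l r, L, h => by
      simp only [lcaSub]
      split
      · exact lcaSub_superset l L ‹_›
      · split
        · exact lcaSub_superset r L ‹_›
        · exact h

lemma lcaSub_not_subset : ∀ (T : BTree α) (L : Finset α) {yl yr : BTree α},
    lcaSub T L = node yl yr → ¬ L ⊆ yl.leaves ∧ ¬ L ⊆ yr.leaves
  | leaf a, L, yl, yr, h => by simp [lcaSub] at h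
  | node l r, L, yl, yr, h => by
      simp only [lcaSub] at h
      split at h
      · exact lcaSub_not_subset l L h
      · split at h
        · exact lcaSub_not_subset r L h
        · cases h; exact ⟨‹_›, ‹_›⟩

lemma mem_unionLeaves {Gs : List (BTree α)} {a : α} :
    a ∈ unionLeaves Gs ↔ ∃ G ∈ Gs, a ∈ G.leaves := by
  induction Gs with
  | nil => simp [unionLeaves]
  | cons g gs ih => simp [unionLeaves, List.foldr] at ih ⊢; rw [ih]


section Main

variable {GInit GTR x : BTree α} {Gs : List (BTree α)}

lemma not_subtree_x_G (hsub : ∀ Gi ∈ Gs, Subtree Gi GInit)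
    (hdisjS : ∀ G ∈ Gs, ∀ G' ∈ Gs, G ≠ G' → Disjoint G.leaves G'.leaves)
    (h2 : atLeastTwo Gs x) {G : BTree α} (hG : G ∈ Gs) (hxG : Subtree x G) : False := by
  obtain ⟨Gi, hGi, Gj, hGj, hij, hix, hjx⟩ := h2
  have key : ∀ H, H ∈ Gs → Subtree H x → H ≠ G → False := by
    intro H hH hHx hne
    have hd := hdisjS H hH G hG hne
    obtain ⟨p, hp⟩ := leaves_nonempty H
    exact Finset.disjoint_left.mp hd hp ((hHx.trans hxG).leaves_subset hp)
  by_cases hiG : Gi = G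
  · exact key Gj hGj hjx (fun h => hij (h ▸ hiG ▸ rfl))
  · exact key Gi hGi hix hiG

lemma G_subtree_or_disjoint (hndI : GInit.nodupLeaves)
    (hsub : ∀ Gi ∈ Gs, Subtree Gi GInit)
    (hdisjS : ∀ G ∈ Gs, ∀ G' ∈ Gs, G ≠ G' → Disjoint G.leaves G'.leaves)
    (hx : Subtree x GInit) (h2 : atLeastTwo Gs x) {G : BTree α} (hG : G ∈ Gs) :
    Subtree G x ∨ Disjoint G.leaves x.leaves := by
  rcases comparable hndI hx (hsub G hG) with h | h | h
  · exact absurd h (fun h' => not_subtree_x_G hsub hdisjS h2 hG h')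
  · exact Or.inl h
  · exact Or.inr h.symm

lemma cherry_clash {t u v : BTree α} (hnd : t.nodupLeaves)
    (hu : Subtree u t) (hv : Subtree v t) {a b c d : α}
    (hul : u.leaves = {a, b}) (hvl : v.leaves = {d, c})
    (hdab : d = a ∨ d = b) (hab : a ≠ b) (hca : c ≠ a) (hcb : c ≠ b) : False := by
  rcases comparable hnd hu hv with h | h | h
  · -- u.leaves ⊆ v.leaves : a, b ∈ {d, c}
    have ha : a ∈ ({d, c} : Finset α) := by
      have h1 : a ∈ u.leaves := by rw [hul]; simp
      have h2 := h.leaves_subset h1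
      rwa [hvl] at h2
    have hb : b ∈ ({d, c} : Finset α) := by
      have h1 : b ∈ u.leaves := by rw [hul]; simp
      have h2 := h.leaves_subset h1
      rwa [hvl] at h2
    simp only [Finset.mem_insert, Finset.mem_singleton] at ha hb
    rcases ha with rfl | rfl
    · rcases hb with rfl | rfl
      · exact hab rfl
      · exact hcb rfl
    · exact hca rfl
  · -- v.leaves ⊆ u.leaves : c ∈ {a, b}
    have hc : c ∈ ({a, b} : Finset α) := by
      have h1 : c ∈ v.leaves := by rw [hvl]; simp
      have h2 := h.leaves_subset h1
      rwa [hul] at h2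
    simp only [Finset.mem_insert, Finset.mem_singleton] at hc
    rcases hc with rfl | rfl
    · exact hca rfl
    · exact hcb rfl
  · have hdu : d ∈ u.leaves := by
      rw [hul]; rcases hdab with rfl | rfl <;> simp
    have hdv : d ∈ v.leaves := by rw [hvl]; simp
    exact Finset.disjoint_left.mp h hdu hdv

lemma inter_triple_ab {S : Finset α} {a b c : α} (ha : a ∈ S) (hb : b ∈ S) (hc : c ∉ S) :
    S ∩ {a, b, c} = {a, b} := by
  ext p
  simp only [Finset.mem_inter, Finset.mem_insert, Finset.mem_singleton]
  constructor
  · rintro ⟨hp, rfl | rfl | rfl⟩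
    · exact Or.inl rfl
    · exact Or.inr rfl
    · exact absurd hp hc
  · rintro (rfl | rfl)
    · exact ⟨ha, Or.inl rfl⟩
    · exact ⟨hb, Or.inr (Or.inl rfl)⟩

lemma inter_triple_ac {S : Finset α} {a b c : α} (ha : a ∈ S) (hb : b ∉ S) (hc : c ∈ S) :
    S ∩ {a, b, c} = {a, c} := by
  ext p
  simp only [Finset.mem_inter, Finset.mem_insert, Finset.mem_singleton]
  constructor
  · rintro ⟨hp, rfl | rfl | rfl⟩
    · exact Or.inl rfl
    · exact absurd hp hb
    · exact Or.inr rfl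
  · rintro (rfl | rfl)
    · exact ⟨ha, Or.inl rfl⟩
    · exact ⟨hc, Or.inr (Or.inr rfl)⟩

lemma inter_triple_bc {S : Finset α} {a b c : α} (ha : a ∉ S) (hb : b ∈ S) (hc : c ∈ S) :
    S ∩ {a, b, c} = {b, c} := by
  ext p
  simp only [Finset.mem_inter, Finset.mem_insert, Finset.mem_singleton]
  constructor
  · rintro ⟨hp, rfl | rfl | rfl⟩
    · exact absurd hp ha
    · exact Or.inl rfl
    · exact Or.inr rfl
  · rintro (rfl | rfl)
    · exact ⟨hb, Or.inr (Or.inl rfl)⟩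
    · exact ⟨hc, Or.inr (Or.inr rfl)⟩

lemma triplet_contra {yl yr : BTree α} (hndT : GTR.nodupLeaves)
    (hx : Subtree x GInit) (hy : Subtree (node yl yr) GTR) {a b c : α}
    (ha_x : a ∈ x.leaves) (hb_x : b ∈ x.leaves) (hc_x : c ∉ x.leaves)
    (ha_l : a ∈ yl.leaves) (hb_r : b ∈ yr.leaves)
    (hc : c ∈ yl.leaves ∨ c ∈ yr.leaves)
    (hst : sameTriplet GInit GTR a b c) : False := by
  obtain ⟨t1, t2, h1, h2, hiso⟩ := hst
  have hndy : (node yl yr).nodupLeaves := nodup_of_subtree hy hndT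
  obtain ⟨hnl, hnr, hdlr⟩ := hndy
  have hab : a ≠ b := fun h => Finset.disjoint_left.mp hdlr ha_l (h ▸ hb_r)
  have hca : c ≠ a := fun h => hc_x (h ▸ ha_x)
  have hcb : c ≠ b := fun h => hc_x (h ▸ hb_x)
  -- the cherry {a,b} in t1
  obtain ⟨u, hu⟩ := restrict_isSome (T := x) (L := {a, b, c}) ha_x (by simp)
  have hul : u.leaves = {a, b} := by
    rw [restrict_leaves hu, inter_triple_ab ha_x hb_x hc_x]
  have hut1 : Subtree u t1 := restrict_subtree h1 hx hu
  obtain ⟨u', hu't2, hu'l⟩ := hiso.subtree_transfer hut1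
  rw [hul] at hu'l
  have hnd2 : t2.nodupLeaves := restrict_nodup hndT h2
  rcases hc with hc_l | hc_r
  · -- c on the left : cherry {a,c} in t2
    obtain ⟨v, hv⟩ := restrict_isSome (T := yl) (L := {a, b, c}) ha_l (by simp)
    have hb_nl : b ∉ yl.leaves := fun h => Finset.disjoint_left.mp hdlr h hb_r
    have hvl : v.leaves = {a, c} := by
      rw [restrict_leaves hv, inter_triple_ac ha_l hb_nl hc_l]
    have hvt2 : Subtree v t2 :=
      restrict_subtree h2 ((Subtree.left (Subtree.refl yl)).trans hy) hv
    exact cherry_clash hnd2 hu't2 hvt2 hu'l hvl (Or.inl rfl) hab hca hcb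
  · -- c on the right : cherry {b,c} in t2
    obtain ⟨v, hv⟩ := restrict_isSome (T := yr) (L := {a, b, c}) hb_r (by simp)
    have ha_nr : a ∉ yr.leaves := fun h => Finset.disjoint_left.mp hdlr ha_l h
    have hvl : v.leaves = {b, c} := by
      rw [restrict_leaves hv, inter_triple_bc ha_nr hb_r hc_r]
    have hvt2 : Subtree v t2 :=
      restrict_subtree h2 ((Subtree.right (Subtree.refl yr)).trans hy) hv
    exact cherry_clash hnd2 hu't2 hvt2 hu'l hvl (Or.inr rfl) hab hca hcb

lemma exists_counterpart (hndI : GInit.nodupLeaves) (hndT : GTR.nodupLeaves)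
    (hsub : ∀ Gi ∈ Gs, Subtree Gi GInit)
    (hdisjS : ∀ G ∈ Gs, ∀ G' ∈ Gs, G ≠ G' → Disjoint G.leaves G'.leaves)
    (hcover : unionLeaves Gs = GInit.leaves)
    (hleaves : GTR.leaves = GInit.leaves)
    (htrip : tripletRespecting GInit GTR Gs)
    (hx : Subtree x GInit) (h2 : atLeastTwo Gs x) :
    ∃ y, Subtree y GTR ∧ y.leaves = x.leaves := by
  have hLsub : x.leaves ⊆ GTR.leaves := hleaves ▸ hx.leaves_subset
  refine ⟨lcaSub GTR x.leaves, lcaSub_subtree _ _, ?_⟩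
  have hLy : x.leaves ⊆ (lcaSub GTR x.leaves).leaves := lcaSub_superset _ _ hLsub
  -- the lca is an internal node
  obtain ⟨Gi, hGi, Gj, hGj, hij, hix, hjx⟩ := h2
  obtain ⟨p, hp⟩ := leaves_nonempty Gi
  obtain ⟨q, hq⟩ := leaves_nonempty Gj
  have hpq : p ≠ q := fun h => Finset.disjoint_left.mp (hdisjS Gi hGi Gj hGj hij) hp (h ▸ hq)
  have hpL : p ∈ x.leaves := hix.leaves_subset hp
  have hqL : q ∈ x.leaves := hjx.leaves_subset hq
  cases hyeq : lcaSub GTR x.leaves with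
  | leaf a =>
    exfalso
    rw [hyeq] at hLy
    have h1 := hLy hpL
    have h2' := hLy hqL
    simp only [leaves, Finset.mem_singleton] at h1 h2'
    exact hpq (h1.trans h2'.symm)
  | node yl yr =>
    rw [hyeq] at hLy
    obtain ⟨hnsl, hnsr⟩ := lcaSub_not_subset GTR x.leaves hyeq
    have hy : Subtree (node yl yr) GTR := hyeq ▸ lcaSub_subtree GTR x.leaves
    -- x.leaves meets both children
    obtain ⟨a0, ha0L, ha0nl⟩ : ∃ a0 ∈ x.leaves, a0 ∉ yr.leaves := by
      by_contra h; push_neg at h; exact hnsr h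
    obtain ⟨b0, hb0L, hb0nr⟩ : ∃ b0 ∈ x.leaves, b0 ∉ yl.leaves := by
      by_contra h; push_neg at h; exact hnsl h
    have ha0l : a0 ∈ yl.leaves := by
      have := hLy ha0L
      simp only [leaves, Finset.mem_union] at this
      tauto
    have hb0r : b0 ∈ yr.leaves := by
      have := hLy hb0L
      simp only [leaves, Finset.mem_union] at this
      tauto
    -- each leaf of x comes from a tree of Gs that is a subtree of x
    have htreeof : ∀ p ∈ x.leaves, ∃ G ∈ Gs, p ∈ G.leaves ∧ Subtree G x := by
      intro p hpx
      have : p ∈ unionLeaves Gs := by rw [hcover]; exact hx.leaves_subset hpx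
      obtain ⟨G, hG, hpG⟩ := mem_unionLeaves.mp this
      refine ⟨G, hG, hpG, ?_⟩
      rcases G_subtree_or_disjoint hndI hsub hdisjS hx ⟨Gi, hGi, Gj, hGj, hij, hix, hjx⟩ hG
        with h | h
      · exact h
      · exact absurd hpx (Finset.disjoint_left.mp h hpG)
    obtain ⟨Ga0, hGa0, ha0G, hGa0x⟩ := htreeof a0 ha0L
    obtain ⟨Gb0, hGb0, hb0G, hGb0x⟩ := htreeof b0 hb0L
    -- find a on the left and b on the right coming from distinct trees
    obtain ⟨a, b, Ga, Gb, hGa, hGb, hGaGb, haG, haL, hal, hbG, hbL, hbr⟩ :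
        ∃ a b Ga Gb, Ga ∈ Gs ∧ Gb ∈ Gs ∧ Ga ≠ Gb ∧ a ∈ Ga.leaves ∧ a ∈ x.leaves ∧
          a ∈ yl.leaves ∧ b ∈ Gb.leaves ∧ b ∈ x.leaves ∧ b ∈ yr.leaves := by
      by_cases hd : Ga0 = Gb0
      · -- all picked from one tree; use Gi or Gj to find another
        have hex : ∃ H ∈ Gs, H ≠ Ga0 ∧ Subtree H x := by
          by_cases hi : Gi = Ga0
          · exact ⟨Gj, hGj, fun h => hij (hi.trans h.symm), hjx⟩
          · exact ⟨Gi, hGi, hi, hix⟩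
        obtain ⟨H, hH, hHne, hHx⟩ := hex
        obtain ⟨d0, hdH⟩ := leaves_nonempty H
        have hdL : d0 ∈ x.leaves := hHx.leaves_subset hdH
        have hdlr : d0 ∈ yl.leaves ∨ d0 ∈ yr.leaves := by
          have := hLy hdL
          simp only [leaves, Finset.mem_union] at this
          exact this
        rcases hdlr with hdl | hdr
        · exact ⟨d0, b0, H, Gb0, hH, hGb0, fun h => hHne (h.trans hd.symm),
            hdH, hdL, hdl, hb0G, hb0L, hb0r⟩
        · exact ⟨a0, d0, Ga0, H, hGa0, hH, fun h => hHne h.symm,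
            ha0G, ha0L, ha0l, hdH, hdL, hdr⟩
      · exact ⟨a0, b0, Ga0, Gb0, hGa0, hGb0, hd, ha0G, ha0L, ha0l, hb0G, hb0L, hb0r⟩
    -- now show the leaves of the lca are exactly x.leaves
    apply Finset.Subset.antisymm _ hLy
    intro c hcy
    by_contra hcx
    -- c belongs to a tree Gk disjoint from x
    have hcT : c ∈ GInit.leaves := hleaves ▸ hy.leaves_subset hcy
    obtain ⟨Gk, hGk, hcG⟩ := mem_unionLeaves.mp (hcover ▸ hcT)
    have hGkx : Disjoint Gk.leaves x.leaves := by
      rcases G_subtree_or_disjoint hndI hsub hdisjS hx ⟨Gi, hGi, Gj, hGj, hij, hix, hjx⟩ hGk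
        with h | h
      · exact absurd (h.leaves_subset hcG) hcx
      · exact h
    have hGkGa : Gk ≠ Ga := fun h =>
      Finset.disjoint_left.mp hGkx (h ▸ haG) haL
    have hGkGb : Gk ≠ Gb := fun h =>
      Finset.disjoint_left.mp hGkx (h ▸ hbG) hbL
    have hst : sameTriplet GInit GTR a b c :=
      htrip Ga hGa Gb hGb Gk hGk hGaGb hGkGa.symm hGkGb.symm a haG b hbG c hcG
    have hcy' : c ∈ yl.leaves ∨ c ∈ yr.leaves := by
      simp only [leaves, Finset.mem_union] at hcy
      exact hcy
    exact triplet_contra hndT hx hy haL hbL hcx hal hbr hcy' hst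

end Main

end BTree

/-- every node of `G^{Init}` with `|𝒢(x)| ≥ 2` has a
counterpart in `G^{TR}` with the same leaf set, and the ancestor relation
between such counterparts coincides with the one in `G^{Init}`. -/
theorem stmt19 {α : Type} [DecidableEq α] (GInit GTR : BTree α) (Gs : List (BTree α))
    (hndI : GInit.nodupLeaves) (hndT : GTR.nodupLeaves)
    (hsub : ∀ Gi ∈ Gs, BTree.Subtree Gi GInit)
    (hdisj : Gs.Pairwise fun a b => Disjoint a.leaves b.leaves)
    (hcover : BTree.unionLeaves Gs = GInit.leaves)
    (hk : 2 ≤ Gs.length)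
    (hleaves : GTR.leaves = GInit.leaves)
    (hdisp : ∀ Gi ∈ Gs, GTR.displays Gi)
    (htrip : BTree.tripletRespecting GInit GTR Gs) :
    (∀ x, BTree.Subtree x GInit → BTree.atLeastTwo Gs x →
        ∃ y, BTree.Subtree y GTR ∧ y.leaves = x.leaves) ∧
      ∀ x x' y y', BTree.Subtree x GInit → BTree.Subtree x' GInit →
        BTree.atLeastTwo Gs x → BTree.atLeastTwo Gs x' →
        BTree.Subtree y GTR → BTree.Subtree y' GTR →
        y.leaves = x.leaves → y'.leaves = x'.leaves →
        (BTree.Subtree x' x ↔ BTree.Subtree y' y) := by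
  have hdisjS : ∀ G ∈ Gs, ∀ G' ∈ Gs, G ≠ G' →
      Disjoint (BTree.leaves G) (BTree.leaves G') :=
    fun G hG G' hG' hne => have : Std.Symm (fun a b : BTree α => Disjoint a.leaves b.leaves) :=
      ⟨fun _ _ h => h.symm⟩
    hdisj.forall hG hG' hne
  constructor
  · intro x hx h2
    exact BTree.exists_counterpart hndI hndT hsub hdisjS hcover hleaves htrip hx h2
  · intro x x' y y' hx hx' h2 h2' hy hy' hyx hyx'
    rw [BTree.subtree_iff_leaves_subset hndI hx hx',
      BTree.subtree_iff_leaves_subset hndT hy hy', hyx, hyx']
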